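/- Let A be an integer matrix with full row rank whose maximal minors all lie in {0, λ, -λ} for some fixed λ > 0, and let u be a nonzero element of ker_Z(A) with inclusion-minimal support. Then all nonzero entries of u have the same absolute value; in particular if the entries of u are relatively prime then u is a {-1,0,1}-vector. -/

import Mathlib

open Matrix Set Submodule

lemma det_updCol_sum {R : Type*} [CommRing R] {m : ℕ} (M : Matrix (Fin m) (Fin m) R)
    (p : Fin m) {ι : Type*} (s : Finset ι) (f : ι → Fin m → R) :
    (M.updateCol p (fun x => ∑ k ∈ s, f k x)).det = ∑ k ∈ s, (M.updateCol p (f k)).det := by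
  classical
  induction s using Finset.induction_on with
  | empty =>
    simp only [Finset.sum_empty]
    exact Matrix.det_eq_zero_of_column_eq_zero p (fun x => by simp [Matrix.updateCol_apply])
  | insert _ _ hnotmem ih =>
    rename_i a s
    simp only [Finset.sum_insert hnotmem]
    rw [← ih]
    have h : (fun x => f a x + ∑ k ∈ s, f k x) = (f a) + (fun x => ∑ k ∈ s, f k x) := rfl
    rw [h, Matrix.det_updateCol_add]

lemma aux_pair {d n : ℕ} (A : Matrix (Fin d) (Fin n) ℤ)
    (hrank : LinearIndependent ℤ (fun i : Fin d => A i))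
    (l : ℤ) (hl : 0 < l)
    (hminor : ∀ g : Fin d → Fin n, Function.Injective g →
      (A.submatrix id g).det = 0 ∨ (A.submatrix id g).det = l ∨ (A.submatrix id g).det = -l)
    (u : Fin n → ℤ) (hker : A.mulVec u = 0)
    (hmin : ∀ v : Fin n → ℤ, v ≠ 0 → A.mulVec v = 0 →
      {i | v i ≠ 0} ⊆ {i | u i ≠ 0} → {i | v i ≠ 0} = {i | u i ≠ 0})
    (i j : Fin n) (hui : u i ≠ 0) (huj : u j ≠ 0) (hij : j ≠ i) :
    |u i| = |u j| := by
  classical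
  set colQ : Fin n → (Fin d → ℚ) := fun k p => (A p k : ℚ) with hcolQ
  set S : Set (Fin n) := {m : Fin n | u m ≠ 0 ∧ m ≠ i} with hSdef
  -- column uniqueness on S
  have huniq : ∀ k k' : Fin n, (u k ≠ 0 ∧ k ≠ i) → (u k' ≠ 0 ∧ k' ≠ i) →
      colQ k = colQ k' → k = k' := by
    intro k k' hk hk' hcol
    by_contra hkk
    set v : Fin n → ℤ := Pi.single k 1 + Pi.single k' (-1) with hv
    have hvk : v k = 1 := by simp [hv, Pi.single_apply, hkk]
    have hvo : ∀ m, m ≠ k → m ≠ k' → v m = 0 := by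
      intro m h1 h2; simp [hv, Pi.single_apply, h1, h2]
    have hv0 : v ≠ 0 := by
      intro h; rw [h] at hvk; simp at hvk
    have hvker : A.mulVec v = 0 := by
      rw [hv, Matrix.mulVec_add, Matrix.mulVec_single, Matrix.mulVec_single]
      funext p
      have hAk : (A p k : ℚ) = (A p k' : ℚ) := congrFun hcol p
      have : A p k = A p k' := by exact_mod_cast hAk
      simp [this]
    have hsub : {m | v m ≠ 0} ⊆ {m | u m ≠ 0} := by
      intro m hm
      by_cases h1 : m = k
      · subst h1; exact hk.1
      · by_cases h2 : m = k'
        · subst h2; exact hk'.1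
        · exact absurd (hvo m h1 h2) hm
    have heq := hmin v hv0 hvker hsub
    have hi : i ∈ {m | u m ≠ 0} := hui
    rw [← heq] at hi
    exact hi (hvo i (Ne.symm hk.2) (Ne.symm hk'.2))
  -- linear independence of columns on S over ℚ
  have hSind : LinearIndependent ℚ (fun k : ↥S => colQ (k : Fin n)) := by
    rw [← LinearIndependent.iff_fractionRing (R := ℤ) (K := ℚ)]
    rw [Fintype.linearIndependent_iff]
    intro c hc
    have hrel : ∀ p : Fin d, ∑ k : ↥S, c k * A p (k : Fin n) = 0 := by
      intro p
      have h1 := congrFun hc p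
      simp only [Finset.sum_apply, Pi.zero_apply] at h1
      have h2 : ∀ k : ↥S, (c k • colQ (k : Fin n)) p = ((c k * A p (k : Fin n) : ℤ) : ℚ) := by
        intro k
        simp [hcolQ, zsmul_eq_mul]
      rw [Finset.sum_congr rfl (fun k _ => h2 k)] at h1
      rw [← Int.cast_sum] at h1
      exact_mod_cast h1
    set v : Fin n → ℤ := fun m => if h : u m ≠ 0 ∧ m ≠ i then c ⟨m, h⟩ else 0 with hv
    have hvS : ∀ k : ↥S, v (k : Fin n) = c k := by
      rintro ⟨m, hm⟩
      exact dif_pos hm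
    have hvo : ∀ m, ¬(u m ≠ 0 ∧ m ≠ i) → v m = 0 := fun m h => dif_neg h
    have hvker : A.mulVec v = 0 := by
      funext p
      show ∑ m : Fin n, A p m * v m = (0 : ℤ)
      have hsum : ∑ m ∈ Finset.univ.filter (· ∈ S), A p m * v m = ∑ m : Fin n, A p m * v m := by
        apply Finset.sum_subset (Finset.filter_subset _ _)
        intro m _ hm
        rw [Finset.mem_filter] at hm
        push_neg at hm
        rw [hvo m (hm (Finset.mem_univ m)), mul_zero]
      rw [← hsum]
      rw [Finset.sum_subtype (p := (· ∈ S)) (s := Finset.univ.filter (· ∈ S)) (by simp)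
        (f := fun m => A p m * v m)]
      exact (Finset.sum_congr rfl (fun k _ => by rw [hvS k, mul_comm])).trans (hrel p)
    intro k
    by_contra hck
    have hv0 : v ≠ 0 := by
      intro h
      have := congrFun h k
      rw [hvS k] at this
      exact hck this
    have hsub : {m | v m ≠ 0} ⊆ {m | u m ≠ 0} := by
      intro m hm
      by_cases h : u m ≠ 0 ∧ m ≠ i
      · exact h.1
      · exact absurd (hvo m h) hm
    have heq := hmin v hv0 hvker hsub
    have hi : i ∈ {m | u m ≠ 0} := hui
    rw [← heq] at hi
    exact hi (hvo i (fun h => h.2 rfl))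
  -- spanning
  have hspan : ⊤ ≤ Submodule.span ℚ (Set.range colQ) := by
    set B : Matrix (Fin d) (Fin n) ℚ := A.map (Int.cast) with hB
    have hrowsZ : LinearIndependent ℤ (fun i : Fin d => B i) := by
      have hmap : (fun i : Fin d => B i) =
          (LinearMap.compLeft (Algebra.linearMap ℤ ℚ) (Fin n)) ∘ (fun i : Fin d => A i) := by
        funext i; funext k; rfl
      rw [hmap]
      apply hrank.map' _
      rw [LinearMap.ker_eq_bot]
      intro x y hxy
      funext k
      have h : ((x k : ℚ)) = (y k : ℚ) := congrFun hxy k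
      exact_mod_cast h
    have hrowsQ : LinearIndependent ℚ (fun i : Fin d => B i) :=
      (LinearIndependent.iff_fractionRing (R := ℤ) (K := ℚ)).mp hrowsZ
    have hrankB : B.rank = d := by
      rw [← Matrix.rank_transpose, Matrix.rank_eq_finrank_span_cols, Matrix.col_def, Matrix.transpose_transpose]
      rw [finrank_span_eq_card hrowsQ]
      simp
    have hrange : Set.range colQ = Set.range Bᵀ := rfl
    rw [hrange]
    have hfin : Module.finrank ℚ (Submodule.span ℚ (Set.range Bᵀ)) = d := by
      rw [show Bᵀ = B.col from rfl, ← Matrix.rank_eq_finrank_span_cols]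
      exact hrankB
    have h := Submodule.eq_top_of_finrank_eq (K := ℚ) (V := Fin d → ℚ)
      (S := Submodule.span ℚ (Set.range Bᵀ)) (by rw [hfin]; simp)
    rw [h]
  -- extend to a basis within the columns
  have hs : LinearIndependent ℚ ((↑) : ↥(colQ '' S) → (Fin d → ℚ)) := LinearIndepOn.id_image hSind
  have hs' : LinearIndepOn ℚ id (colQ '' S) := hs
  have hst : colQ '' S ⊆ Set.range colQ := Set.image_subset_range _ _
  set b : Set (Fin d → ℚ) := hs'.extend hst with hbdef
  have basis : Module.Basis ↥b ℚ (Fin d → ℚ) := Module.Basis.extendLe hs' hst hspan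
  haveI : Fintype ↥b := FiniteDimensional.fintypeBasisIndex basis
  have hcard : Fintype.card ↥b = d := by
    rw [← Module.finrank_eq_card_basis basis]
    simp
  set eqv : Fin d ≃ ↥b := Fintype.equivOfCardEq (by rw [Fintype.card_fin, hcard]) with heqv
  have hbt : b ⊆ Set.range colQ := hs'.extend_subset hst
  have hsb : colQ '' S ⊆ b := hs'.subset_extend hst
  have hmemb : ∀ k : Fin n, (u k ≠ 0 ∧ k ≠ i) → colQ k ∈ b := fun k hk => hsb ⟨k, hk, rfl⟩
  -- the column-selection map
  set g0 : ↥b → Fin n := fun v =>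
    if h : ∃ k, (u k ≠ 0 ∧ k ≠ i) ∧ colQ k = (v : Fin d → ℚ) then h.choose
    else (hbt v.2).choose with hg0def
  have hg0col : ∀ v : ↥b, colQ (g0 v) = (v : Fin d → ℚ) := by
    intro v
    by_cases h : ∃ k, (u k ≠ 0 ∧ k ≠ i) ∧ colQ k = (v : Fin d → ℚ)
    · rw [hg0def]; simp only [dif_pos h]; exact h.choose_spec.2
    · rw [hg0def]; simp only [dif_neg h]; exact (hbt v.2).choose_spec
  have hg0S : ∀ (k : Fin n) (hk : u k ≠ 0 ∧ k ≠ i), g0 ⟨colQ k, hmemb k hk⟩ = k := by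
    intro k hk
    have hex : ∃ k', (u k' ≠ 0 ∧ k' ≠ i) ∧ colQ k' = colQ k := ⟨k, hk, rfl⟩
    have h1 : g0 ⟨colQ k, hmemb k hk⟩ = hex.choose := by rw [hg0def]; simp only [dif_pos hex]
    rw [h1]
    exact huniq _ _ hex.choose_spec.1 hk hex.choose_spec.2
  have hg0inj : Function.Injective g0 := by
    intro v1 v2 h
    have := (hg0col v1).symm.trans ((congrArg colQ h).trans (hg0col v2))
    exact Subtype.ext this
  set g : Fin d → Fin n := g0 ∘ eqv with hgdef
  have hginj : Function.Injective g := hg0inj.comp eqv.injective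
  set p₀ : Fin d := eqv.symm ⟨colQ j, hmemb j ⟨huj, hij⟩⟩ with hp₀
  have hgp₀ : g p₀ = j := by
    rw [hgdef]
    show g0 (eqv (eqv.symm _)) = j
    rw [Equiv.apply_symm_apply]
    exact hg0S j ⟨huj, hij⟩
  have hrangeg : ∀ (k : Fin n) (hk : u k ≠ 0 ∧ k ≠ i),
      g (eqv.symm ⟨colQ k, hmemb k hk⟩) = k := by
    intro k hk
    show g0 (eqv (eqv.symm _)) = k
    rw [Equiv.apply_symm_apply]
    exact hg0S k hk
  set M : Matrix (Fin d) (Fin d) ℤ := A.submatrix id g with hM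
  -- det M ≠ 0
  have hdetM : M.det ≠ 0 := by
    have hone : LinearIndependent ℚ (fun q : Fin d => (M.map (Int.cast : ℤ → ℚ))ᵀ q) := by
      have hco : (fun q : Fin d => (M.map (Int.cast : ℤ → ℚ))ᵀ q)
          = (fun v : ↥b => (v : Fin d → ℚ)) ∘ eqv := by
        funext q
        show colQ (g q) = ((eqv q : ↥b) : Fin d → ℚ)
        exact hg0col (eqv q)
      rw [hco]
      exact LinearIndependent.comp (hs'.linearIndepOn_extend hst) eqv eqv.injective
    have hunit : IsUnit (M.map (Int.cast : ℤ → ℚ)) := Matrix.linearIndependent_cols_iff_isUnit.mp hone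
    have hdq : (M.map (Int.cast : ℤ → ℚ)).det ≠ 0 :=
      ((Matrix.isUnit_iff_isUnit_det _).mp hunit).ne_zero
    have hcast : ((M.det : ℚ)) = (M.map (Int.cast : ℤ → ℚ)).det := by
      have := RingHom.map_det (Int.castRingHom ℚ) M
      simpa using this
    intro h
    apply hdq
    rw [← hcast, h]
    simp
  have habsM : |M.det| = l := by
    rcases hminor g hginj with h | h | h
    · exact absurd h hdetM
    · rw [h]; exact abs_of_pos hl
    · rw [h, abs_neg]; exact abs_of_pos hl
  -- Cramer identity
  set g' : Fin d → Fin n := Function.update g p₀ i with hg'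
  set M' : Matrix (Fin d) (Fin d) ℤ := A.submatrix id g' with hM'
  have hMupd : M.updateCol p₀ (fun p => A p i) = M' := by
    ext x q
    by_cases h : q = p₀
    · subst h; simp [Matrix.updateCol_apply, hM', hg']
    · rw [Matrix.updateCol_apply, if_neg h]
      show A x (g q) = A x (Function.update g p₀ i q)
      rw [Function.update_of_ne h]
  have hcram : u j * M.det = -(u i * M'.det) := by
    set wcol : Fin d → ℤ := fun p => ∑ k ∈ Finset.univ.erase i, u k * A p k with hwcol
    have E2 : wcol = fun p => (-u i) * A p i := by
      funext p
      have h0 : ∑ k : Fin n, A p k * u k = 0 := congrFun hker p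
      have h1 : ∑ k ∈ Finset.univ.erase i, A p k * u k + A p i * u i = ∑ k : Fin n, A p k * u k :=
        Finset.sum_erase_add _ _ (Finset.mem_univ i)
      rw [h0] at h1
      have h2 : ∑ k ∈ Finset.univ.erase i, u k * A p k = ∑ k ∈ Finset.univ.erase i, A p k * u k :=
        Finset.sum_congr rfl (fun k _ => mul_comm _ _)
      rw [hwcol]
      show ∑ k ∈ Finset.univ.erase i, u k * A p k = -u i * A p i
      rw [h2]
      linarith
    have E1 : (M.updateCol p₀ wcol).det = u j * M.det := by
      rw [hwcol]
      rw [det_updCol_sum M p₀ (Finset.univ.erase i) (fun k p => u k * A p k)]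
      have hterm : ∀ k ∈ Finset.univ.erase i, (M.updateCol p₀ (fun p => u k * A p k)).det
          = u k * (M.updateCol p₀ (fun p => A p k)).det := by
        intro k _
        have : (fun p => u k * A p k) = (u k) • (fun p => A p k) := rfl
        rw [this, Matrix.det_updateCol_smul]
      rw [Finset.sum_congr rfl hterm]
      rw [Finset.sum_eq_single_of_mem j (Finset.mem_erase.mpr ⟨hij, Finset.mem_univ j⟩)]
      · have : (fun p => A p j) = fun p => M p p₀ := by
          funext p; rw [hM]; show A p j = A p (g p₀); rw [hgp₀]
        rw [this, Matrix.updateCol_eq_self]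
      · intro k hk hkj
        by_cases huk : u k = 0
        · rw [huk, zero_mul]
        · have hki : k ≠ i := (Finset.mem_erase.mp hk).1
          have hkS : u k ≠ 0 ∧ k ≠ i := ⟨huk, hki⟩
          set q : Fin d := eqv.symm ⟨colQ k, hmemb k hkS⟩ with hq
          have hgq : g q = k := hrangeg k hkS
          have hqp : q ≠ p₀ := by
            intro h
            rw [h, hgp₀] at hgq
            exact hkj hgq.symm
          have hdet0 : (M.updateCol p₀ (fun p => A p k)).det = 0 := by
            apply Matrix.det_zero_of_column_eq hqp
            intro x
            rw [Matrix.updateCol_apply, Matrix.updateCol_apply]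
            rw [if_neg hqp, if_pos rfl]
            show A x (g q) = A x k
            rw [hgq]
          rw [hdet0, mul_zero]
    have E2' : (M.updateCol p₀ wcol).det = -(u i * M'.det) := by
      rw [E2]
      have : (fun p => (-u i) * A p i) = (-u i) • (fun p => A p i) := rfl
      rw [this, Matrix.det_updateCol_smul, hMupd]
      ring
    rw [← E1, E2']
  -- conclude
  have hM'0 : M'.det ≠ 0 := by
    intro h
    rw [h, mul_zero, neg_zero, mul_eq_zero] at hcram
    rcases hcram with h | h
    · exact huj h
    · exact hdetM h
  have habsM' : |M'.det| = l := by
    by_cases hginj' : Function.Injective g'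
    · rcases hminor g' hginj' with h | h | h
      · exact absurd h hM'0
      · rw [h]; exact abs_of_pos hl
      · rw [h, abs_neg]; exact abs_of_pos hl
    · exfalso
      apply hM'0
      have hq : ∃ q, q ≠ p₀ ∧ g q = i := by
        rw [Function.not_injective_iff] at hginj'
        obtain ⟨a, c, hac, hne⟩ := hginj'
        by_cases ha : a = p₀
        · have hcp : c ≠ p₀ := fun h => hne (ha.trans h.symm)
          refine ⟨c, hcp, ?_⟩
          have h1 : g' c = g c := Function.update_of_ne hcp _ _
          have h2 : g' a = i := by rw [hg', ha]; exact Function.update_self _ _ _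
          rw [← h1, ← hac, h2]
        · by_cases hc : c = p₀
          · refine ⟨a, ha, ?_⟩
            have h1 : g' a = g a := Function.update_of_ne ha _ _
            have h2 : g' c = i := by rw [hg', hc]; exact Function.update_self _ _ _
            rw [← h1, hac, h2]
          · have h1 : g' a = g a := Function.update_of_ne ha _ _
            have h2 : g' c = g c := Function.update_of_ne hc _ _
            rw [h1, h2] at hac
            exact absurd (hginj hac) hne
      obtain ⟨q, hqp, hgq⟩ := hq
      apply Matrix.det_zero_of_column_eq hqp
      intro x
      show A x (g' q) = A x (g' p₀)
      rw [hg', Function.update_of_ne hqp, Function.update_self, hgq]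
  have habs := congrArg (|·|) hcram
  simp only [abs_mul, abs_neg] at habs
  rw [habsM, habsM'] at habs
  have := mul_right_cancel₀ (ne_of_gt hl) habs
  rw [this]

/-- Let `A` be a full-row-rank integer matrix whose maximal minors all lie in `{0, l, -l}` for
some `l > 0`, and let `u` be a nonzero integer kernel vector of inclusion-minimal support.
Then all nonzero entries of `u` have the same absolute value; in particular, if the entries of
`u` are relatively prime then `u` is a `{-1,0,1}`-vector. -/
theorem stmt19 {d n : ℕ} (A : Matrix (Fin d) (Fin n) ℤ)
    (hrank : LinearIndependent ℤ (fun i : Fin d => A i))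
    (l : ℤ) (hl : 0 < l)
    (hminor : ∀ g : Fin d → Fin n, Function.Injective g →
      (A.submatrix id g).det = 0 ∨ (A.submatrix id g).det = l ∨ (A.submatrix id g).det = -l)
    (u : Fin n → ℤ) (hu0 : u ≠ 0) (hker : A.mulVec u = 0)
    (hmin : ∀ v : Fin n → ℤ, v ≠ 0 → A.mulVec v = 0 →
      {i | v i ≠ 0} ⊆ {i | u i ≠ 0} → {i | v i ≠ 0} = {i | u i ≠ 0}) :
    (∀ i j, u i ≠ 0 → u j ≠ 0 → |u i| = |u j|) ∧
    (Finset.univ.gcd u = 1 → ∀ i, u i = -1 ∨ u i = 0 ∨ u i = 1) := by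
  have part1 : ∀ i j, u i ≠ 0 → u j ≠ 0 → |u i| = |u j| := by
    intro i j hi hj
    by_cases h : j = i
    · rw [h]
    · exact aux_pair A hrank l hl hminor u hker hmin i j hi hj h
  refine ⟨part1, ?_⟩
  intro hgcd i
  by_cases hi : u i = 0
  · right; left; exact hi
  · have hdvd : ∀ m, |u i| ∣ u m := by
      intro m
      by_cases hm : u m = 0
      · rw [hm]; exact dvd_zero _
      · rw [part1 i m hi hm]
        exact (abs_dvd _ _).mpr dvd_rfl
    have hdvd1 : |u i| ∣ 1 := by
      rw [← hgcd]
      exact Finset.dvd_gcd (fun m _ => hdvd m)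
    have habs : |u i| = 1 := Int.eq_one_of_dvd_one (abs_nonneg _) hdvd1
    rcases (abs_eq (by norm_num : (0:ℤ) ≤ 1)).mp habs with h | h
    · right; right; exact h
    · left; exact h
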